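/- Let w : [0,∞) → ℝ be continuous, nonnegative, integrable with W(z) = ∫_0^∞ e^{-zu} w(u) du for Re z ≥ 0, and suppose W(z) → 0 uniformly as |z| → ∞ in the half-plane Re z ≥ 0. If Re W(iy) ≥ 0 for all real y, then Re W(z) ≥ 0 for all z with Re z ≥ 0. -/

import Mathlib

open MeasureTheory Complex Filter Metric

lemma aux_mul_exp_le {a u : ℝ} (ha : 0 < a) (hu : 0 ≤ u) :
    u * Real.exp (-(a * u)) ≤ 1 / a := by
  have hE : (0:ℝ) < Real.exp (a * u) := Real.exp_pos _
  rw [Real.exp_neg, ← div_eq_mul_inv, div_le_div_iff₀ hE ha]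
  have := Real.add_one_le_exp (a * u)
  nlinarith

theorem laplace_re_nonneg (w : ℝ → ℝ)
    (hcont : ContinuousOn w (Set.Ici 0))
    (hnonneg : ∀ u : ℝ, 0 ≤ u → 0 ≤ w u)
    (hint : IntegrableOn w (Set.Ici 0))
    (W : ℂ → ℂ)
    (hW : ∀ z : ℂ, W z = ∫ u in Set.Ici (0 : ℝ), Complex.exp (-z * u) * (w u : ℂ))
    (hdecay : ∀ ε > (0 : ℝ), ∃ R : ℝ, ∀ z : ℂ, 0 ≤ z.re → R ≤ ‖z‖ →
      ‖W z‖ < ε)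
    (him : ∀ y : ℝ, 0 ≤ (W (Complex.I * y)).re) :
    ∀ z : ℂ, 0 ≤ z.re → 0 ≤ (W z).re := by
  set μ := volume.restrict (Set.Ici (0:ℝ)) with hμ
  have hae : ∀ᵐ u ∂μ, 0 ≤ u := ae_restrict_mem measurableSet_Ici
  have hwm : AEStronglyMeasurable (fun u => (w u : ℂ)) μ :=
    Complex.continuous_ofReal.comp_aestronglyMeasurable
      (hcont.aestronglyMeasurable measurableSet_Ici)
  -- measurability of the integrand
  have hFmeas : ∀ z : ℂ, AEStronglyMeasurable (fun u : ℝ => Complex.exp (-z * u) * (w u : ℂ)) μ := by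
    intro z
    exact (((continuous_const.mul Complex.continuous_ofReal).cexp).aestronglyMeasurable).mul hwm
  -- pointwise norm bound
  have hnorm : ∀ z : ℂ, ∀ u : ℝ, 0 ≤ u →
      ‖Complex.exp (-z * u) * (w u : ℂ)‖ = Real.exp (-(z.re * u)) * w u := by
    intro z u hu
    have h0 : (-z * (u:ℂ)).re = -(z.re * u) := by simp
    rw [norm_mul, Complex.norm_exp, Complex.norm_real,
      Real.norm_eq_abs, _root_.abs_of_nonneg (hnonneg u hu), h0]
  have hbnd : ∀ z : ℂ, 0 ≤ z.re → ∀ᵐ (u : ℝ) ∂μ, ‖Complex.exp (-z * u) * (w u : ℂ)‖ ≤ w u := by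
    intro z hz
    filter_upwards [hae] with u hu
    rw [hnorm z u hu]
    have h1 : Real.exp (-(z.re * u)) ≤ 1 := by
      rw [Real.exp_le_one_iff]
      nlinarith
    nlinarith [hnonneg u hu, Real.exp_pos (-(z.re * u))]
  have hFint : ∀ z : ℂ, 0 ≤ z.re →
      Integrable (fun u : ℝ => Complex.exp (-z * u) * (w u : ℂ)) μ := by
    intro z hz
    exact Integrable.mono' hint (hFmeas z) (hbnd z hz)
  -- global bound on W
  set M := ∫ u, w u ∂μ with hM
  have hWbound : ∀ z : ℂ, 0 ≤ z.re → ‖W z‖ ≤ M := by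
    intro z hz
    rw [hW z]
    exact norm_integral_le_of_norm_le hint (hbnd z hz)
  -- continuity on the closed half-plane
  have hWcont : ContinuousOn W {z : ℂ | 0 ≤ z.re} := by
    have : ContinuousOn (fun z : ℂ => ∫ u, Complex.exp (-z * u) * (w u : ℂ) ∂μ)
        {z : ℂ | 0 ≤ z.re} := by
      apply continuousOn_of_dominated (bound := w)
      · intro z _; exact hFmeas z
      · intro z hz; exact hbnd z hz
      · exact hint
      · filter_upwards with u
        exact Continuous.continuousOn (((continuous_neg.mul continuous_const).cexp).mul continuous_const)
    exact this.congr (fun z _ => hW z)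
  -- differentiability on the open half-plane
  have hWdiff : DifferentiableOn ℂ W {z : ℂ | 0 < z.re} := by
    intro z₀ hz₀
    have hx₀ : (0:ℝ) < z₀.re := hz₀
    set ε : ℝ := z₀.re / 2 with hε
    have hε0 : 0 < ε := by positivity
    have hball : ∀ z ∈ ball z₀ ε, ε ≤ z.re := by
      intro z hz
      have h2 : ‖z - z₀‖ < ε := by
        rw [mem_ball, Complex.dist_eq] at hz; exact hz
      have h3 : |(z - z₀).re| ≤ ‖z - z₀‖ := Complex.abs_re_le_norm _
      have h4 : -(ε) ≤ (z - z₀).re := by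
        have := neg_abs_le ((z - z₀).re); linarith
      have h5 : (z - z₀).re = z.re - z₀.re := by simp
      rw [h5] at h4
      linarith [hε]
    have key := hasDerivAt_integral_of_dominated_loc_of_deriv_le (μ := μ)
      (F := fun (z : ℂ) (u : ℝ) => Complex.exp (-z * u) * (w u : ℂ))
      (F' := fun (z : ℂ) (u : ℝ) => Complex.exp (-z * u) * (-(u:ℂ)) * (w u : ℂ))
      (x₀ := z₀) (bound := fun u => (1/ε) * w u) (ball_mem_nhds z₀ hε0)
      (Eventually.of_forall fun z => hFmeas z)
      (hFint z₀ (le_of_lt hx₀))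
      ((((continuous_const.mul Complex.continuous_ofReal).cexp).mul Complex.continuous_ofReal.neg).aestronglyMeasurable.mul hwm)
      ?_ (hint.const_mul _) ?_
    · have : DifferentiableAt ℂ (fun z => ∫ u, Complex.exp (-z * u) * (w u : ℂ) ∂μ) z₀ :=
        key.2.differentiableAt
      have heq : W = fun z => ∫ u, Complex.exp (-z * u) * (w u : ℂ) ∂μ := funext hW
      rw [heq]
      exact this.differentiableWithinAt
    · filter_upwards [hae] with u hu
      intro z hz
      have hzre : ε ≤ z.re := hball z hz
      rw [norm_mul, norm_mul, Complex.norm_exp]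
      have h1 : (-z * u).re = -(z.re * u) := by simp
      rw [h1, Complex.norm_real, Real.norm_eq_abs, _root_.abs_of_nonneg (hnonneg u hu)]
      have h2 : ‖(-(u:ℂ))‖ = u := by
        rw [norm_neg, Complex.norm_real, Real.norm_eq_abs, _root_.abs_of_nonneg hu]
      rw [h2]
      have h3 : Real.exp (-(z.re * u)) ≤ Real.exp (-(ε * u)) := by
        apply Real.exp_le_exp.mpr
        nlinarith
      have h4 : u * Real.exp (-(ε * u)) ≤ 1 / ε := aux_mul_exp_le hε0 hu
      have h5 : Real.exp (-(z.re * u)) * u ≤ 1 / ε := by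
        nlinarith [Real.exp_pos (-(ε * u)), Real.exp_pos (-(z.re * u))]
      nlinarith [hnonneg u hu, Real.exp_pos (-(z.re * u)), mul_nonneg (Real.exp_pos (-(z.re*u))).le hu]
    · filter_upwards with u
      intro z _
      have h1 : HasDerivAt (fun z : ℂ => -z * (u:ℂ)) (-(u:ℂ)) z := by
        simpa using ((hasDerivAt_id z).neg.mul_const (u:ℂ))
      exact (h1.cexp).mul_const _
  -- apply Phragmen-Lindelof to exp(-W)
  set f : ℂ → ℂ := fun z => Complex.exp (-W z) with hf
  have hfnorm : ∀ z : ℂ, ‖f z‖ = Real.exp (-(W z).re) := by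
    intro z
    rw [hf]
    simp [Complex.norm_exp]
  have hd : DiffContOnCl ℂ f {z : ℂ | 0 < z.re} := by
    constructor
    · exact ((hWdiff.neg).cexp)
    · have hsub : closure {z : ℂ | 0 < z.re} ⊆ {z : ℂ | 0 ≤ z.re} := by
        apply closure_minimal
        · intro z hz; exact le_of_lt (Set.mem_setOf.mp hz)
        · exact isClosed_le continuous_const Complex.continuous_re
      exact ((hWcont.neg).cexp).mono hsub
  have hexp : ∃ c < (2 : ℝ), ∃ B, f =O[Bornology.cobounded ℂ ⊓ 𝓟 {z : ℂ | 0 < z.re}]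
      fun z => Real.exp (B * ‖z‖ ^ c) := by
    refine ⟨1, one_lt_two, 0, ?_⟩
    rw [Asymptotics.isBigO_iff]
    refine ⟨Real.exp M, ?_⟩
    rw [eventually_inf_principal]
    filter_upwards with z hz
    simp only [zero_mul, Real.exp_zero, norm_one, mul_one]
    rw [hfnorm]
    apply Real.exp_le_exp.mpr
    have := hWbound z (le_of_lt (Set.mem_setOf.mp hz))
    have h2 : |(W z).re| ≤ ‖W z‖ := Complex.abs_re_le_norm _
    have := neg_abs_le ((W z).re)
    linarith
  have hre : IsBoundedUnder (· ≤ ·) atTop fun x : ℝ => ‖f x‖ := by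
    refine ⟨Real.exp M, ?_⟩
    rw [eventually_map]
    filter_upwards [eventually_ge_atTop (0:ℝ)] with x hx
    rw [hfnorm]
    apply Real.exp_le_exp.mpr
    have h1 := hWbound x (by simpa using hx)
    have h2 : |(W x).re| ≤ ‖W x‖ := Complex.abs_re_le_norm _
    have := neg_abs_le ((W x).re)
    linarith
  have him' : ∀ x : ℝ, ‖f (x * Complex.I)‖ ≤ 1 := by
    intro x
    rw [hfnorm, Real.exp_le_one_iff]
    have := him x
    rw [mul_comm] at this
    linarith
  intro z hz
  have := PhragmenLindelof.right_half_plane_of_bounded_on_real hd hexp hre him' hz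
  rw [hfnorm, Real.exp_le_one_iff] at this
  linarith
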